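/- Let d be an even positive integer and let P(x) = ∑_{j=0}^{d} a_j x^j be a polynomial with rational coefficients satisfying the palindromic condition a_j = a_{d-j} for all 0 ≤ j ≤ d. For n ≥ 0 and integer k, let A(n,k) denote the coefficient of x^k in P(x)^n · (1 - x^2). Then for every natural number n, the sum over all integers k of A(n,k)·A(n,k+1) equals A(2n, dn+1) - A(2n, dn+3). -/

import Mathlib

open Polynomial

private lemma reflect_pow' {R : Type*} [CommSemiring R] (f : R[X]) (F : ℕ)
    (hf : f.natDegree ≤ F) (n : ℕ) :
    reflect (F * n) (f ^ n) = (reflect F f) ^ n := by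
  induction n with
  | zero => simp [reflect_one]
  | succ n ih =>
    have h1 : f.natDegree * n ≤ F * n := Nat.mul_le_mul_right n hf
    have h2 : (f ^ n).natDegree ≤ F * n := (natDegree_pow_le).trans (by
      rw [mul_comm]; exact h1)
    rw [pow_succ, Nat.mul_succ, reflect_mul (f ^ n) f h2 hf, ih, pow_succ]

theorem general_triangle_convolution (d : ℕ) (hd_even : Even d) (hd_pos : 0 < d) (a : ℕ → ℚ)
    (hpal : ∀ j ≤ d, a j = a (d - j))
    (P : ℚ[X]) (hP : P = ∑ j ∈ Finset.range (d + 1), C (a j) * X ^ j)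
    (A : ℕ → ℤ → ℚ)
    (hA : ∀ (n : ℕ) (k : ℤ),
      A n k = if k < 0 then 0 else (P ^ n * (1 - X ^ 2)).coeff k.toNat) :
    ∀ n : ℕ,
      ∑ᶠ k : ℤ, A n k * A n (k + 1) =
        A (2 * n) ((d : ℤ) * n + 1) - A (2 * n) ((d : ℤ) * n + 3) := by
  -- degree bound on P
  have hPdeg : P.natDegree ≤ d := by
    rw [hP]
    apply natDegree_sum_le_of_forall_le
    intro j hj
    exact (natDegree_C_mul_X_pow_le (a j) j).trans (Nat.lt_succ_iff.mp (Finset.mem_range.mp hj))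
  -- coefficients of P
  have hPcoeff : ∀ j ≤ d, P.coeff j = a j := by
    intro j hj
    rw [hP, finset_sum_coeff]
    simp only [coeff_C_mul, coeff_X_pow]
    rw [Finset.sum_eq_single j]
    · simp
    · intro b _ hbj
      simp [Ne.symm hbj]
    · intro h
      exact absurd (Finset.mem_range.mpr (Nat.lt_succ_of_le hj)) h
  -- P is palindromic
  have hPrefl : reflect d P = P := by
    ext i
    rw [coeff_reflect]
    by_cases hi : i ≤ d
    · rw [revAt_le hi, hPcoeff (d - i) (Nat.sub_le d i), hPcoeff i hi, hpal i hi]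
    · rw [revAt_eq_self_of_lt (Nat.lt_of_not_le hi)]
  have hXdeg : (1 - X ^ 2 : ℚ[X]).natDegree ≤ 2 := by
    compute_degree
  have hXrefl : reflect 2 (1 - X ^ 2 : ℚ[X]) = -(1 - X ^ 2) := by
    have : (1 - X ^ 2 : ℚ[X]) = X ^ 0 - X ^ 2 := by ring
    rw [this, reflect_sub, reflect_monomial, reflect_monomial]
    simp [revAt_le]
  intro n
  set Q : ℚ[X] := P ^ n * (1 - X ^ 2) with hQ
  set N : ℕ := d * n with hN
  have hPn : (P ^ n).natDegree ≤ N := natDegree_pow_le.trans (by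
    rw [hN, mul_comm d n]; exact Nat.mul_le_mul le_rfl hPdeg)
  have hQdeg : Q.natDegree ≤ N + 2 :=
    natDegree_mul_le.trans (add_le_add hPn hXdeg)
  have hQrefl : reflect (N + 2) Q = -Q := by
    rw [hQ, reflect_mul (P ^ n) (1 - X ^ 2) hPn hXdeg, reflect_pow' P d hPdeg n, hPrefl, hXrefl]
    ring
  -- anti-palindromic coefficients of Q
  have hQc : ∀ i ≤ N + 2, Q.coeff (N + 2 - i) = -Q.coeff i := by
    intro i hi
    have := congrArg (fun p => p.coeff i) hQrefl
    simp only [coeff_reflect, coeff_neg] at this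
    rw [revAt_le hi] at this
    exact this
  -- Q² is palindromic
  have hQ2refl : reflect (N + 2 + (N + 2)) (Q * Q) = Q * Q := by
    rw [reflect_mul Q Q hQdeg hQdeg, hQrefl]
    ring
  have key1 : (Q * Q).coeff (N + 3) = (Q * Q).coeff (N + 1) := by
    have := congrArg (fun p => p.coeff (N + 1)) hQ2refl
    simp only [coeff_reflect] at this
    rw [revAt_le (by omega)] at this
    have h3 : N + 2 + (N + 2) - (N + 1) = N + 3 := by omega
    rw [h3] at this
    exact this
  -- Q * Q = (P^(2n) * (1 - X^2)) * (1 - X^2)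
  have hQQ : Q * Q = (P ^ (2 * n) * (1 - X ^ 2)) * (1 - X ^ 2) := by
    rw [hQ, two_mul, pow_add]; ring
  -- RHS computation
  set R : ℚ[X] := P ^ (2 * n) * (1 - X ^ 2) with hR
  have hRHS : A (2 * n) ((d : ℤ) * n + 1) - A (2 * n) ((d : ℤ) * n + 3)
      = -(Q * Q).coeff (N + 3) := by
    rw [hA, hA, hQQ, ← hR]
    have e1 : ((d : ℤ) * n + 1) = ((N + 1 : ℕ) : ℤ) := by push_cast [hN]; ring
    have e3 : ((d : ℤ) * n + 3) = ((N + 3 : ℕ) : ℤ) := by push_cast [hN]; ring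
    rw [e1, e3]
    rw [if_neg (by omega), if_neg (by omega)]
    rw [Int.toNat_natCast, Int.toNat_natCast]
    have : R * (1 - X ^ 2) = R - R * X ^ 2 := by ring
    rw [this, coeff_sub]
    have h2 : (R * X ^ 2).coeff (N + 3) = R.coeff (N + 1) := by
      have : N + 3 = (N + 1) + 2 := by omega
      rw [this, coeff_mul_X_pow]
    rw [h2]
    ring
  rw [hRHS, key1]
  -- LHS computation
  have hsupp : Function.support (fun k : ℤ => A n k * A n (k + 1)) ⊆
      ((Finset.range (N + 3)).map ⟨(Nat.cast : ℕ → ℤ), Nat.cast_injective⟩ : Finset ℤ) := by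
    intro k hk
    simp only [Function.mem_support] at hk
    have h1 : A n k ≠ 0 := fun h => hk (by rw [h, zero_mul])
    rw [hA] at h1
    have hk0 : ¬ k < 0 := fun h => h1 (if_pos h)
    rw [if_neg hk0] at h1
    have hle : k.toNat ≤ Q.natDegree := le_natDegree_of_ne_zero h1
    simp only [Finset.mem_coe, Finset.mem_map, Finset.mem_range, Function.Embedding.coeFn_mk]
    exact ⟨k.toNat, by omega, by omega⟩
  rw [finsum_eq_sum_of_support_subset _ hsupp, Finset.sum_map]
  simp only [Function.Embedding.coeFn_mk]
  have hterm : ∀ j : ℕ, A n (j : ℤ) * A n ((j : ℤ) + 1) = Q.coeff j * Q.coeff (j + 1) := by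
    intro j
    rw [hA, hA, if_neg (by omega), if_neg (by omega)]
    norm_num
    rfl
  simp only [hterm]
  -- now a finite nat-indexed sum
  have hcm : (Q * Q).coeff (N + 1) = ∑ j ∈ Finset.range (N + 2), Q.coeff j * Q.coeff (N + 1 - j) := by
    rw [coeff_mul, Finset.Nat.sum_antidiagonal_eq_sum_range_succ_mk]
  rw [hcm]
  rw [Finset.sum_range_succ (fun j => Q.coeff j * Q.coeff (j + 1)) (N + 2)]
  have hz : Q.coeff (N + 2 + 1) = 0 := coeff_eq_zero_of_natDegree_lt (by omega)
  rw [hz, mul_zero, add_zero]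
  rw [← Finset.sum_neg_distrib]
  apply Finset.sum_congr rfl
  intro j hj
  have hjle : j + 1 ≤ N + 2 := by
    have := Finset.mem_range.mp hj; omega
  have := hQc (j + 1) hjle
  rw [show N + 2 - (j + 1) = N + 1 - j by omega] at this
  rw [this]
  ring
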